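/- Fix α > 0, c ≥ 0, B > 0, T ∈ ℕ with T ≥ 1, and a nondegenerate bounded interval I. Set b_t = B/T for all t and K = c/(2B^α). For any deterministic sequence of query points X₁, …, X_T ∈ I and recommendation R_T ∈ I produced as a function of the fuzzy evaluations J_t = [f(X_t) − c/(2𝔅_t^α), f(X_t) + c/(2𝔅_t^α)] (where 𝔅_t = ∑_{s≤t} b_s·1{X_s = X_t}), with the two alternatives f± as in the lower-bound construction, the evaluations J_t are identical for f₊ and f₋, and hence there exists f ∈ {f₊, f₋} with f(R_T) − inf_I f ≥ c/(2B^α) ≥ (1/4)·c/(∑_t b_t)^α. -/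

import Mathlib

/-- First case of the lower bound (Theorem 2): the fuzzy evaluations are identical for
`f₊` and `f₋`, hence some alternative has optimization error at least `c/(2B^α)`. -/
theorem stmt19 (α c B : ℝ) (hα : 0 < α) (hc : 0 ≤ c) (hB : 0 < B)
    (T : ℕ) (hT : 1 ≤ T) (lo hi : ℝ) (hI : lo < hi)
    (X : ℕ → ℝ) (hX : ∀ t, 1 ≤ t → t ≤ T → X t ∈ Set.Icc lo hi)
    (R : ℝ) (hR : R ∈ Set.Icc lo hi)
    (fp fm : ℝ → ℝ)
    (hfp : ∀ x, fp x = (1 - 2 * (x - lo) / (hi - lo)) * (c / (2 * B ^ α)))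
    (hfm : ∀ x, fm x = -(1 - 2 * (x - lo) / (hi - lo)) * (c / (2 * B ^ α)))
    (Bud : ℕ → ℝ)
    (hBud : ∀ t, Bud t = ∑ s ∈ Finset.Icc 1 t, if X s = X t then B / T else 0) :
    (∀ t, 1 ≤ t → t ≤ T →
      fp (X t) ∈ Set.Icc (-(c / (2 * (Bud t) ^ α))) (c / (2 * (Bud t) ^ α)) ∧
      fm (X t) ∈ Set.Icc (-(c / (2 * (Bud t) ^ α))) (c / (2 * (Bud t) ^ α))) ∧
    (∃ f ∈ ({fp, fm} : Set (ℝ → ℝ)),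
      c / (2 * B ^ α) ≤ f R - sInf (f '' Set.Icc lo hi) ∧
      (1 / 4) * (c / (∑ t ∈ Finset.Icc 1 T, (B / T)) ^ α) ≤ c / (2 * B ^ α)) := by
  have hIpos : 0 < hi - lo := sub_pos.mpr hI
  have hBα : 0 < B ^ α := Real.rpow_pos_of_pos hB α
  have hTR : (1:ℝ) ≤ (T:ℝ) := by exact_mod_cast hT
  have hTpos : (0:ℝ) < (T:ℝ) := lt_of_lt_of_le one_pos hTR
  set K := c / (2 * B ^ α) with hKdef
  have hK : 0 ≤ K := by positivity
  -- bounds on the affine factor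
  have hm : ∀ x ∈ Set.Icc lo hi,
      -1 ≤ 1 - 2 * (x - lo) / (hi - lo) ∧ 1 - 2 * (x - lo) / (hi - lo) ≤ 1 := by
    intro x hx
    obtain ⟨h1, h2⟩ := hx
    have hfle : 2 * (x - lo) / (hi - lo) ≤ 2 := by
      rw [div_le_iff₀ hIpos]; linarith
    have hfge : 0 ≤ 2 * (x - lo) / (hi - lo) :=
      div_nonneg (by linarith) hIpos.le
    constructor <;> linarith
  constructor
  · intro t h1 h2
    have hBudpos : 0 < Bud t := by
      rw [hBud]
      have ht : t ∈ Finset.Icc 1 t := Finset.mem_Icc.mpr ⟨h1, le_refl t⟩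
      have hle := Finset.single_le_sum
        (f := fun s => if X s = X t then B / (T:ℝ) else 0)
        (fun s _ => by split <;> positivity) ht
      simp only [if_pos rfl] at hle
      calc (0:ℝ) < B / T := by positivity
        _ ≤ _ := hle
    have hBudle : Bud t ≤ B := by
      rw [hBud]
      calc ∑ s ∈ Finset.Icc 1 t, (if X s = X t then B / (T:ℝ) else 0)
          ≤ ∑ s ∈ Finset.Icc 1 t, (B / (T:ℝ)) :=
            Finset.sum_le_sum (fun s _ => by
              split
              · exact le_rfl
              · positivity)
        _ = (t:ℝ) * (B / T) := by
            rw [Finset.sum_const, Nat.card_Icc]; simp [nsmul_eq_mul]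
        _ ≤ (T:ℝ) * (B / T) := by
            apply mul_le_mul_of_nonneg_right (by exact_mod_cast h2) (by positivity)
        _ = B := by field_simp
    have hpow : Bud t ^ α ≤ B ^ α := Real.rpow_le_rpow hBudpos.le hBudle hα.le
    have hBudα : 0 < Bud t ^ α := Real.rpow_pos_of_pos hBudpos α
    have hKle : K ≤ c / (2 * Bud t ^ α) := by
      rw [hKdef]
      apply div_le_div_of_nonneg_left hc (by positivity) (by linarith)
    obtain ⟨hm1, hm2⟩ := hm (X t) (hX t h1 h2)
    have hfpb : -K ≤ fp (X t) ∧ fp (X t) ≤ K := by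
      rw [hfp]
      constructor <;> nlinarith
    have hfmb : -K ≤ fm (X t) ∧ fm (X t) ≤ K := by
      rw [hfm]
      constructor <;> nlinarith
    constructor <;> rw [Set.mem_Icc] <;>
      exact ⟨by linarith [hfpb.1, hfmb.1], by linarith [hfpb.2, hfmb.2]⟩
  · have hsum : ∑ t ∈ Finset.Icc 1 T, (B / (T:ℝ)) = B := by
      rw [Finset.sum_const, Nat.card_Icc]
      simp only [Nat.add_sub_cancel, nsmul_eq_mul]
      field_simp
    have hineq2 : (1/4) * (c / (∑ t ∈ Finset.Icc 1 T, (B / (T:ℝ))) ^ α) ≤ K := by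
      rw [hsum, hKdef]
      have hd : 0 ≤ c / B ^ α := by positivity
      have heq : c / (2 * B ^ α) = (c / B ^ α) / 2 := by ring
      rw [heq]; linarith
    have hdiv : (hi - lo) / (hi - lo) = 1 := div_self hIpos.ne'
    by_cases hRm : R ≤ (lo + hi) / 2
    · refine ⟨fp, Or.inl rfl, ?_, hineq2⟩
      have hval : fp hi = -K := by
        rw [hfp]
        have h2 : 2 * (hi - lo) / (hi - lo) = 2 := by
          rw [mul_div_assoc, hdiv]; ring
        rw [h2]; ring
      have hbdd : ∀ y ∈ fp '' Set.Icc lo hi, -K ≤ y := by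
        rintro y ⟨x, hx, rfl⟩
        obtain ⟨hm1, hm2⟩ := hm x hx
        rw [hfp]; nlinarith
      have hsInf : sInf (fp '' Set.Icc lo hi) ≤ -K := by
        have hmem : fp hi ∈ fp '' Set.Icc lo hi := ⟨hi, ⟨hI.le, le_refl hi⟩, rfl⟩
        have := csInf_le ⟨-K, fun y hy => hbdd y hy⟩ hmem
        linarith [hval ▸ this]
      have hfR : 0 ≤ fp R := by
        rw [hfp]
        have h1 : 2 * (R - lo) / (hi - lo) ≤ 1 := by
          rw [div_le_one hIpos]; linarith
        have h0 : 0 ≤ 1 - 2 * (R - lo) / (hi - lo) := by linarith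
        exact mul_nonneg h0 hK
      linarith
    · refine ⟨fm, Or.inr rfl, ?_, hineq2⟩
      push_neg at hRm
      have hval : fm lo = -K := by
        rw [hfm]
        have h0 : 2 * (lo - lo) / (hi - lo) = 0 := by
          rw [sub_self]; ring
        rw [h0]; ring
      have hbdd : ∀ y ∈ fm '' Set.Icc lo hi, -K ≤ y := by
        rintro y ⟨x, hx, rfl⟩
        obtain ⟨hm1, hm2⟩ := hm x hx
        rw [hfm]; nlinarith
      have hsInf : sInf (fm '' Set.Icc lo hi) ≤ -K := by
        have hmem : fm lo ∈ fm '' Set.Icc lo hi := ⟨lo, ⟨le_refl lo, hI.le⟩, rfl⟩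
        have := csInf_le ⟨-K, fun y hy => hbdd y hy⟩ hmem
        linarith [hval ▸ this]
      have hfR : 0 ≤ fm R := by
        rw [hfm]
        have h1 : 1 ≤ 2 * (R - lo) / (hi - lo) := by
          rw [le_div_iff₀ hIpos]; linarith
        nlinarith
      linarith
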